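/- For every even integer n ≥ 4, there exists an edge-friendly labeling f of the crown graph K_n × K_2 such that |v_f(0) − v_f(1)| = 2n−4; that is, 2n−4 ∈ EBI(K_n × K_2). -/

import Mathlib

open SimpleGraph

/-- The lexicographic product (composition) `G[H]`. -/
def lexProd {α β : Type*} (G : SimpleGraph α) (H : SimpleGraph β) :
    SimpleGraph (α × β) where
  Adj x y := G.Adj x.1 y.1 ∨ (x.1 = y.1 ∧ H.Adj x.2 y.2)
  symm := ⟨fun x y h =>
    h.elim (fun h' => Or.inl h'.symm) (fun ⟨he, h2⟩ => Or.inr ⟨he.symm, h2.symm⟩)⟩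
  loopless := ⟨fun x h =>
    h.elim (G.loopless.irrefl x.1) (fun ⟨_, h2⟩ => H.loopless.irrefl x.2 h2)⟩

/-- The direct (tensor, Kronecker) product `G × H`. -/
def tensorProd {α β : Type*} (G : SimpleGraph α) (H : SimpleGraph β) :
    SimpleGraph (α × β) where
  Adj x y := G.Adj x.1 y.1 ∧ H.Adj x.2 y.2
  symm := ⟨fun _ _ ⟨h1, h2⟩ => ⟨h1.symm, h2.symm⟩⟩
  loopless := ⟨fun x h => G.loopless.irrefl x.1 h.1⟩

/-- The number of edges labeled `i` by the edge labeling `f`. -/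
noncomputable def edgeCount {V : Type*} (G : SimpleGraph V) (f : G.edgeSet → ZMod 2) (i : ZMod 2) : ℕ :=
  Nat.card {e : G.edgeSet // f e = i}

/-- The number of edges incident to `v` that are labeled `i` (the `i`-degree of `v`). -/
noncomputable def labDeg {V : Type*} (G : SimpleGraph V) (f : G.edgeSet → ZMod 2) (i : ZMod 2) (v : V) : ℕ :=
  Nat.card {e : G.edgeSet // f e = i ∧ v ∈ (e : Sym2 V)}

/-- The number of vertices whose induced (partial) label is `i`: those incident to strictly
more `i`-edges than `(1-i)`-edges. -/
noncomputable def vertexCount {V : Type*} (G : SimpleGraph V) (f : G.edgeSet → ZMod 2) (i : ZMod 2) : ℕ :=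
  Nat.card {v : V // labDeg G f (1 - i) v < labDeg G f i v}

/-- An edge labeling (a surjective function onto `ZMod 2`) is edge-friendly if
`|e_f(0) - e_f(1)| ≤ 1`. -/
def EdgeFriendly {V : Type*} (G : SimpleGraph V) (f : G.edgeSet → ZMod 2) : Prop :=
  Function.Surjective f ∧ |(edgeCount G f 0 : ℤ) - (edgeCount G f 1 : ℤ)| ≤ 1

/-- A graph is strongly edge-balanced if some edge-friendly labeling `f` satisfies
`v_f(0) = v_f(1)` and `e_f(0) = e_f(1)`. -/
def StronglyEdgeBalanced {V : Type*} (G : SimpleGraph V) : Prop :=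
  ∃ f : G.edgeSet → ZMod 2, EdgeFriendly G f ∧
    vertexCount G f 0 = vertexCount G f 1 ∧ edgeCount G f 0 = edgeCount G f 1

/-- `|v_f(0) - v_f(1)|` for an edge labeling `f`. -/
noncomputable def ebIndex {V : Type*} (G : SimpleGraph V) (f : G.edgeSet → ZMod 2) : ℕ :=
  ((vertexCount G f 0 : ℤ) - (vertexCount G f 1 : ℤ)).natAbs

/-- The edge-balanced index set of `G`. -/
def EBI {V : Type*} (G : SimpleGraph V) : Set ℕ :=
  {k | ∃ f : G.edgeSet → ZMod 2, EdgeFriendly G f ∧ ebIndex G f = k}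

/-- The crown graph `K_n × K_2`: the direct product of the complete graph on `n` vertices
with `K_2`; `(u,a)` is adjacent to `(v,b)` iff `u ≠ v` and `a ≠ b`. -/
def crown (n : ℕ) : SimpleGraph (Fin n × Fin 2) :=
  tensorProd (⊤ : SimpleGraph (Fin n)) (⊤ : SimpleGraph (Fin 2))


section CRaux
open Finset

/-- value of `x % m` for `x < 2*m`. -/
private lemma CR.mod2 (m x : ℕ) (hm : 0 < m) (hx : x < 2 * m) :
    x % m = if x < m then x else x - m := by
  split
  · exact Nat.mod_eq_of_lt ‹_›
  · rw [Nat.mod_eq_sub_mod (by omega), Nat.mod_eq_of_lt (by omega)]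

def CR.kk (n : ℕ) : ℕ := (n - 4) / 2

def CR.dd (n a b : ℕ) : ℕ := (b + (n - 1) - a) % (n - 1)

def CR.jj (n a d : ℕ) : ℕ := (a - 1 + d) % (n - 1) + 1

namespace CR

lemma dd_eq {n a b : ℕ} (hn : 4 ≤ n) (ha : 1 ≤ a) (ha' : a ≤ n - 1)
    (hb : 1 ≤ b) (hb' : b ≤ n - 1) :
    dd n a b = if a ≤ b then b - a else b + (n - 1) - a := by
  rw [dd, CR.mod2 (n - 1) _ (by omega) (by omega)]
  split_ifs <;> omega

lemma dd_bounds {n a b : ℕ} (hn : 4 ≤ n) (ha : 1 ≤ a) (ha' : a ≤ n - 1)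
    (hb : 1 ≤ b) (hb' : b ≤ n - 1) (hab : a ≠ b) :
    1 ≤ dd n a b ∧ dd n a b ≤ n - 2 := by
  rw [dd_eq hn ha ha' hb hb']
  split_ifs <;> omega

lemma dd_add {n a b : ℕ} (hn : 4 ≤ n) (ha : 1 ≤ a) (ha' : a ≤ n - 1)
    (hb : 1 ≤ b) (hb' : b ≤ n - 1) (hab : a ≠ b) :
    dd n a b + dd n b a = n - 1 := by
  rw [dd_eq hn ha ha' hb hb', dd_eq hn hb hb' ha ha']
  split_ifs <;> omega

lemma jj_bounds {n a d : ℕ} (hn : 4 ≤ n) : 1 ≤ jj n a d ∧ jj n a d ≤ n - 1 := by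
  have := Nat.mod_lt (a - 1 + d) (show 0 < n - 1 by omega)
  unfold jj; omega

lemma dd_jj {n a d : ℕ} (hn : 4 ≤ n) (ha : 1 ≤ a) (ha' : a ≤ n - 1)
    (hd : 1 ≤ d) (hd' : d ≤ n - 2) :
    dd n a (jj n a d) = d := by
  have h1 : (a - 1 + d) % (n - 1) = if a - 1 + d < n - 1 then a - 1 + d else a - 1 + d - (n - 1) :=
    CR.mod2 _ _ (by omega) (by omega)
  have hj1 : 1 ≤ jj n a d := (jj_bounds hn).1
  have hj2 : jj n a d ≤ n - 1 := (jj_bounds hn).2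
  rw [dd_eq hn ha ha' hj1 hj2]
  unfold jj at *
  split_ifs at h1 ⊢ <;> omega

lemma jj_dd {n a b : ℕ} (hn : 4 ≤ n) (ha : 1 ≤ a) (ha' : a ≤ n - 1)
    (hb : 1 ≤ b) (hb' : b ≤ n - 1) (hab : a ≠ b) :
    jj n a (dd n a b) = b := by
  rw [dd_eq hn ha ha' hb hb']
  unfold jj
  rw [CR.mod2 (n - 1) _ (by omega) (by split_ifs <;> omega)]
  split_ifs <;> omega

lemma dd_self {n a : ℕ} (hn : 4 ≤ n) (ha' : a ≤ n - 1) : dd n a a = 0 := by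
  rw [dd, CR.mod2 (n - 1) _ (by omega) (by omega)]
  split_ifs <;> omega

/-- the labeling matrix -/
def g (n : ℕ) (u v : Fin n) : ZMod 2 :=
  if u = v then 0
  else if u.val = 0 ∨ v.val = 0 then 1
  else if dd n u.val v.val ≤ kk n then 1 else 0

lemma zmod2_ne : (0 : ZMod 2) ≠ 1 := by decide

lemma g_diag (n : ℕ) (u : Fin n) : g n u u = 0 := by simp [g]

lemma g_zero_left {n : ℕ} {u v : Fin n} (hu : u.val = 0) (h : u ≠ v) : g n u v = 1 := by
  simp [g, h, hu]

lemma g_vzero {n : ℕ} {u v : Fin n} (hu : u.val ≠ 0) (hv : v.val = 0) : g n u v = 1 := by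
  have : u ≠ v := fun h => hu (h ▸ hv)
  simp [g, this, hv]

lemma g_main {n : ℕ} {u v : Fin n} (hu : u.val ≠ 0) (hv : v.val ≠ 0) (hne : u ≠ v) :
    g n u v = if dd n u.val v.val ≤ kk n then 1 else 0 := by
  simp [g, hne, hu, hv]

/-- core bijective count -/
lemma core {n : ℕ} (hn : 4 ≤ n) (a : Fin n) (ha : a.val ≠ 0)
    (Pd : ℕ → Prop) [DecidablePred Pd] :
    (univ.filter fun b : Fin n => b.val ≠ 0 ∧ b ≠ a ∧ Pd (dd n a.val b.val)).card
      = ((Finset.Icc 1 (n - 2)).filter Pd).card := by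
  have ha1 : 1 ≤ a.val := by omega
  have ha2 : a.val ≤ n - 1 := by have := a.isLt; omega
  apply Finset.card_nbij' (i := fun b => dd n a.val b.val)
      (j := fun d => (⟨jj n a.val d, by have := (jj_bounds (n := n) (a := a.val) (d := d) hn); omega⟩ : Fin n))
  · intro b hb
    simp only [mem_coe, mem_filter, mem_univ, true_and] at hb
    obtain ⟨hb0, hba, hPd⟩ := hb
    have hb1 : 1 ≤ b.val := by omega
    have hb2 : b.val ≤ n - 1 := by have := b.isLt; omega
    have hne : a.val ≠ b.val := fun h => hba (Fin.ext h.symm)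
    have := dd_bounds hn ha1 ha2 hb1 hb2 hne
    simp only [mem_coe, mem_filter, Finset.mem_Icc]
    exact ⟨⟨this.1, this.2⟩, hPd⟩
  · intro d hd
    simp only [mem_coe, mem_filter, Finset.mem_Icc] at hd
    obtain ⟨⟨hd1, hd2⟩, hPd⟩ := hd
    have hjb := jj_bounds (n := n) (a := a.val) (d := d) hn
    have hddjj := dd_jj hn ha1 ha2 hd1 hd2
    simp only [mem_coe, mem_filter, mem_univ, true_and]
    refine ⟨by omega, ?_, by rw [hddjj]; exact hPd⟩
    intro h
    have hv : jj n a.val d = a.val := congrArg Fin.val h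
    rw [hv, dd_self hn ha2] at hddjj
    omega
  · intro b hb
    simp only [mem_coe, mem_filter, mem_univ, true_and] at hb
    obtain ⟨hb0, hba, _⟩ := hb
    have hb1 : 1 ≤ b.val := by omega
    have hb2 : b.val ≤ n - 1 := by have := b.isLt; omega
    have hne : a.val ≠ b.val := fun h => hba (Fin.ext h.symm)
    exact Fin.ext (jj_dd hn ha1 ha2 hb1 hb2 hne)
  · intro d hd
    simp only [mem_coe, mem_filter, Finset.mem_Icc] at hd
    exact dd_jj hn ha1 ha2 hd.1.1 hd.1.2

end CR

namespace CR

lemma zmod2_ne' : (1 : ZMod 2) ≠ 0 := by decide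

lemma row1 {n : ℕ} (hn : 4 ≤ n) (hk : n = 2 * kk n + 4) (u : Fin n) (hu : u.val ≠ 0) :
    (univ.filter fun v : Fin n => u ≠ v ∧ g n u v = 1).card = kk n + 1 := by
  have hset : (univ.filter fun v : Fin n => u ≠ v ∧ g n u v = 1)
      = insert (⟨0, by omega⟩ : Fin n)
          (univ.filter fun v : Fin n => v.val ≠ 0 ∧ v ≠ u ∧ dd n u.val v.val ≤ kk n) := by
    ext v
    simp only [mem_filter, mem_univ, true_and, mem_insert]
    constructor
    · rintro ⟨hne, hg⟩
      by_cases hv : v.val = 0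
      · exact Or.inl (Fin.ext hv)
      · refine Or.inr ⟨hv, Ne.symm hne, ?_⟩
        rw [g_main hu hv hne] at hg
        by_contra hdd
        rw [if_neg hdd] at hg
        exact zmod2_ne hg
    · rintro (rfl | ⟨hv0, hvu, hdd⟩)
      · exact ⟨fun h => hu (congrArg Fin.val h), g_vzero hu rfl⟩
      · exact ⟨Ne.symm hvu, by rw [g_main hu hv0 (Ne.symm hvu), if_pos hdd]⟩
  rw [hset, Finset.card_insert_of_notMem (by simp), core hn u hu (Pd := (· ≤ kk n))]
  have : ((Finset.Icc 1 (n - 2)).filter (· ≤ kk n)) = Finset.Icc 1 (kk n) := by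
    ext d; simp only [mem_filter, Finset.mem_Icc]; omega
  rw [this, Nat.card_Icc]; omega

lemma row0 {n : ℕ} (hn : 4 ≤ n) (hk : n = 2 * kk n + 4) (u : Fin n) (hu : u.val ≠ 0) :
    (univ.filter fun v : Fin n => u ≠ v ∧ g n u v = 0).card = kk n + 2 := by
  have hset : (univ.filter fun v : Fin n => u ≠ v ∧ g n u v = 0)
      = univ.filter fun v : Fin n => v.val ≠ 0 ∧ v ≠ u ∧ ¬ dd n u.val v.val ≤ kk n := by
    ext v
    simp only [mem_filter, mem_univ, true_and]
    constructor
    · rintro ⟨hne, hg⟩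
      by_cases hv : v.val = 0
      · rw [g_vzero hu hv] at hg; exact absurd hg zmod2_ne'
      · refine ⟨hv, Ne.symm hne, ?_⟩
        rw [g_main hu hv hne] at hg
        intro hdd
        rw [if_pos hdd] at hg
        exact zmod2_ne' hg
    · rintro ⟨hv0, hvu, hdd⟩
      exact ⟨Ne.symm hvu, by rw [g_main hu hv0 (Ne.symm hvu), if_neg hdd]⟩
  rw [hset, core hn u hu (Pd := fun d => ¬ d ≤ kk n)]
  have : ((Finset.Icc 1 (n - 2)).filter (fun d => ¬ d ≤ kk n)) = Finset.Icc (kk n + 1) (n - 2) := by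
    ext d; simp only [mem_filter, Finset.mem_Icc]; omega
  rw [this, Nat.card_Icc]; omega

lemma rowz1 {n : ℕ} (hn : 4 ≤ n) (u : Fin n) (hu : u.val = 0) :
    (univ.filter fun v : Fin n => u ≠ v ∧ g n u v = 1).card = n - 1 := by
  have hset : (univ.filter fun v : Fin n => u ≠ v ∧ g n u v = 1)
      = univ.filter fun v : Fin n => u ≠ v := by
    ext v
    simp only [mem_filter, mem_univ, true_and, and_iff_left_iff_imp]
    exact fun hne => g_zero_left hu hne
  rw [hset]
  have : (univ.filter fun v : Fin n => u ≠ v) = univ.erase u := by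
    ext v; simp [ne_comm]
  rw [this, Finset.card_erase_of_mem (mem_univ u), card_univ, Fintype.card_fin]

lemma rowz0 {n : ℕ} (u : Fin n) (hu : u.val = 0) :
    (univ.filter fun v : Fin n => u ≠ v ∧ g n u v = 0).card = 0 := by
  rw [Finset.card_eq_zero, Finset.filter_eq_empty_iff]
  rintro v - ⟨hne, hg⟩
  rw [g_zero_left hu hne] at hg
  exact zmod2_ne' hg

lemma col1 {n : ℕ} (hn : 4 ≤ n) (hk : n = 2 * kk n + 4) (v : Fin n) (hv : v.val ≠ 0) :
    (univ.filter fun u : Fin n => u ≠ v ∧ g n u v = 1).card = kk n + 1 := by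
  have hv1 : 1 ≤ v.val := by omega
  have hv2 : v.val ≤ n - 1 := by have := v.isLt; omega
  have hset : (univ.filter fun u : Fin n => u ≠ v ∧ g n u v = 1)
      = insert (⟨0, by omega⟩ : Fin n)
          (univ.filter fun u : Fin n => u.val ≠ 0 ∧ u ≠ v ∧ n - 1 - dd n v.val u.val ≤ kk n) := by
    ext u
    simp only [mem_filter, mem_univ, true_and, mem_insert]
    by_cases hu0 : u.val = 0
    · constructor
      · rintro ⟨-, -⟩; exact Or.inl (Fin.ext hu0)
      · rintro -
        exact ⟨fun h => hv (by rw [← h]; exact hu0), g_zero_left hu0 (fun h => hv (by rw [← h]; exact hu0))⟩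
    · have hu1 : 1 ≤ u.val := by omega
      have hu2 : u.val ≤ n - 1 := by have := u.isLt; omega
      constructor
      · rintro ⟨hne, hg⟩
        have hvalne : u.val ≠ v.val := fun h => hne (Fin.ext h)
        have hadd := dd_add hn hu1 hu2 hv1 hv2 hvalne
        have hbd := dd_bounds hn hv1 hv2 hu1 hu2 (Ne.symm hvalne)
        rw [g_main hu0 hv hne] at hg
        refine Or.inr ⟨hu0, hne, ?_⟩
        by_contra hdd
        have : ¬ dd n u.val v.val ≤ kk n := by omega
        rw [if_neg this] at hg
        exact zmod2_ne hg
      · rintro (heq | ⟨-, hne, hdd⟩)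
        · exact absurd (congrArg Fin.val heq) hu0
        · have hvalne : u.val ≠ v.val := fun h => hne (Fin.ext h)
          have hadd := dd_add hn hu1 hu2 hv1 hv2 hvalne
          have hbd := dd_bounds hn hv1 hv2 hu1 hu2 (Ne.symm hvalne)
          refine ⟨hne, ?_⟩
          rw [g_main hu0 hv hne, if_pos (by omega)]
  rw [hset, Finset.card_insert_of_notMem (by simp),
    core hn v hv (Pd := fun d => n - 1 - d ≤ kk n)]
  have : ((Finset.Icc 1 (n - 2)).filter (fun d => n - 1 - d ≤ kk n))
      = Finset.Icc (n - 1 - kk n) (n - 2) := by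
    ext d; simp only [mem_filter, Finset.mem_Icc]; omega
  rw [this, Nat.card_Icc]; omega

lemma col0 {n : ℕ} (hn : 4 ≤ n) (hk : n = 2 * kk n + 4) (v : Fin n) (hv : v.val ≠ 0) :
    (univ.filter fun u : Fin n => u ≠ v ∧ g n u v = 0).card = kk n + 2 := by
  have hv1 : 1 ≤ v.val := by omega
  have hv2 : v.val ≤ n - 1 := by have := v.isLt; omega
  have hset : (univ.filter fun u : Fin n => u ≠ v ∧ g n u v = 0)
      = univ.filter fun u : Fin n => u.val ≠ 0 ∧ u ≠ v ∧ ¬ (n - 1 - dd n v.val u.val ≤ kk n) := by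
    ext u
    simp only [mem_filter, mem_univ, true_and]
    by_cases hu0 : u.val = 0
    · constructor
      · rintro ⟨hne, hg⟩
        rw [g_zero_left hu0 hne] at hg
        exact absurd hg zmod2_ne'
      · rintro ⟨h, -⟩; exact absurd hu0 h
    · have hu1 : 1 ≤ u.val := by omega
      have hu2 : u.val ≤ n - 1 := by have := u.isLt; omega
      constructor
      · rintro ⟨hne, hg⟩
        have hvalne : u.val ≠ v.val := fun h => hne (Fin.ext h)
        have hadd := dd_add hn hu1 hu2 hv1 hv2 hvalne
        have hbd := dd_bounds hn hv1 hv2 hu1 hu2 (Ne.symm hvalne)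
        rw [g_main hu0 hv hne] at hg
        refine ⟨hu0, hne, ?_⟩
        intro hdd
        have : dd n u.val v.val ≤ kk n := by omega
        rw [if_pos this] at hg
        exact zmod2_ne' hg
      · rintro ⟨-, hne, hdd⟩
        have hvalne : u.val ≠ v.val := fun h => hne (Fin.ext h)
        have hadd := dd_add hn hu1 hu2 hv1 hv2 hvalne
        have hbd := dd_bounds hn hv1 hv2 hu1 hu2 (Ne.symm hvalne)
        refine ⟨hne, ?_⟩
        rw [g_main hu0 hv hne, if_neg (by omega)]
  rw [hset, core hn v hv (Pd := fun d => ¬ (n - 1 - d ≤ kk n))]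
  have : ((Finset.Icc 1 (n - 2)).filter (fun d => ¬ (n - 1 - d ≤ kk n)))
      = Finset.Icc 1 (n - 2 - kk n) := by
    ext d; simp only [mem_filter, Finset.mem_Icc]; omega
  rw [this, Nat.card_Icc]; omega

lemma colz1 {n : ℕ} (hn : 4 ≤ n) (v : Fin n) (hv : v.val = 0) :
    (univ.filter fun u : Fin n => u ≠ v ∧ g n u v = 1).card = n - 1 := by
  have hset : (univ.filter fun u : Fin n => u ≠ v ∧ g n u v = 1)
      = univ.filter fun u : Fin n => u ≠ v := by
    ext u
    simp only [mem_filter, mem_univ, true_and, and_iff_left_iff_imp]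
    intro hne
    have hu0 : u.val ≠ 0 := fun h => hne (Fin.ext (h.trans hv.symm))
    exact g_vzero hu0 hv
  rw [hset, Finset.filter_ne', Finset.card_erase_of_mem (mem_univ v), card_univ, Fintype.card_fin]

lemma colz0 {n : ℕ} (v : Fin n) (hv : v.val = 0) :
    (univ.filter fun u : Fin n => u ≠ v ∧ g n u v = 0).card = 0 := by
  rw [Finset.card_eq_zero, Finset.filter_eq_empty_iff]
  rintro u - ⟨hne, hg⟩
  have hu0 : u.val ≠ 0 := fun h => hne (Fin.ext (h.trans hv.symm))
  rw [g_vzero hu0 hv] at hg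
  exact zmod2_ne' hg

end CR

namespace CR

def F2 (n : ℕ) : Fin n × Fin 2 → Fin n × Fin 2 → ZMod 2 := fun x y =>
  if x.2.val = 0 ∧ y.2.val = 1 then g n x.1 y.1
  else if x.2.val = 1 ∧ y.2.val = 0 then g n y.1 x.1
  else 0

lemma F2_symm (n : ℕ) : ∀ x y, F2 n x y = F2 n y x := by
  intro x y
  unfold F2
  split_ifs <;> first | rfl | omega

def Flab (n : ℕ) : Sym2 (Fin n × Fin 2) → ZMod 2 := Sym2.lift ⟨F2 n, F2_symm n⟩

lemma Flab_mk (n : ℕ) (x y : Fin n × Fin 2) : Flab n s(x, y) = F2 n x y := Sym2.lift_mk _ _ _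

lemma F2_eval (n : ℕ) (u v : Fin n) : F2 n (u, 0) (v, 1) = g n u v := by
  simp [F2]

def fcrown (n : ℕ) : (crown n).edgeSet → ZMod 2 := fun e => Flab n e.val

lemma crown_adj {n : ℕ} (x y : Fin n × Fin 2) :
    (crown n).Adj x y ↔ x.1 ≠ y.1 ∧ x.2 ≠ y.2 :=
  ⟨fun h => ⟨(top_adj _ _).mp h.1, (top_adj _ _).mp h.2⟩,
    fun h => ⟨(top_adj _ _).mpr h.1, (top_adj _ _).mpr h.2⟩⟩

lemma card_master (n : ℕ) (Q : Sym2 (Fin n × Fin 2) → Prop) :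
    Nat.card {e : (crown n).edgeSet // Q e.val}
      = Nat.card {p : Fin n × Fin n // p.1 ≠ p.2 ∧ Q s((p.1, 0), (p.2, 1))} := by
  refine (Nat.card_congr (Equiv.ofBijective
    (fun p : {p : Fin n × Fin n // p.1 ≠ p.2 ∧ Q s((p.1, 0), (p.2, 1))} =>
      (⟨⟨s((p.val.1, 0), (p.val.2, 1)),
        (SimpleGraph.mem_edgeSet _).mpr ((crown_adj _ _).mpr
          ⟨p.prop.1, (by decide : ((0 : Fin 2) ≠ (1 : Fin 2)))⟩)⟩,
        p.prop.2⟩ : {e : (crown n).edgeSet // Q e.val}))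
    ⟨?_, ?_⟩)).symm
  · intro p q h
    have h2 : s(((p.val.1 : Fin n), (0 : Fin 2)), (p.val.2, 1))
        = s((q.val.1, 0), (q.val.2, 1)) := congrArg (fun e => e.val.val) h
    rw [Sym2.eq_iff] at h2
    rcases h2 with ⟨ha, hb⟩ | ⟨ha, hb⟩
    · have ha1 := congrArg Prod.fst ha
      have hb1 := congrArg Prod.fst hb
      have ha1' : p.val.1 = q.val.1 := ha1
      have hb1' : p.val.2 = q.val.2 := hb1
      exact Subtype.ext (Prod.ext ha1' hb1')
    · have ha2 := congrArg Prod.snd ha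
      have ha2' : (0 : Fin 2) = 1 := ha2
      exact absurd ha2' (by decide)
  · rintro ⟨⟨e, he⟩, hQ⟩
    induction e using Sym2.ind with
    | _ x y =>
      rw [SimpleGraph.mem_edgeSet] at he
      obtain ⟨h1, h2⟩ := (crown_adj x y).mp he
      have hcase : (x.2.val = 0 ∧ y.2.val = 1) ∨ (x.2.val = 1 ∧ y.2.val = 0) := by
        have hx := x.2.isLt; have hy := y.2.isLt
        have : x.2.val ≠ y.2.val := fun h => h2 (Fin.ext h)
        omega
      rcases hcase with ⟨hx0, hy1⟩ | ⟨hx1, hy0⟩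
      · have hx : x = (x.1, (0 : Fin 2)) := Prod.ext rfl (Fin.ext hx0)
        have hy : y = (y.1, (1 : Fin 2)) := Prod.ext rfl (Fin.ext hy1)
        have hedge : s((x.1, (0 : Fin 2)), (y.1, (1 : Fin 2))) = s(x, y) := by
          rw [← hx, ← hy]
        refine ⟨⟨(x.1, y.1), h1, by rw [hedge]; exact hQ⟩, ?_⟩
        exact Subtype.ext (Subtype.ext hedge)
      · have hx : x = (x.1, (1 : Fin 2)) := Prod.ext rfl (Fin.ext hx1)
        have hy : y = (y.1, (0 : Fin 2)) := Prod.ext rfl (Fin.ext hy0)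
        have hedge : s((y.1, (0 : Fin 2)), (x.1, (1 : Fin 2))) = s(x, y) := by
          rw [← hx, ← hy, Sym2.eq_swap]
        refine ⟨⟨(y.1, x.1), Ne.symm h1, by rw [hedge]; exact hQ⟩, ?_⟩
        exact Subtype.ext (Subtype.ext hedge)

lemma labDeg_row (n : ℕ) (u : Fin n) (i : ZMod 2) :
    labDeg (crown n) (fcrown n) i (u, 0)
      = (univ.filter fun v : Fin n => u ≠ v ∧ g n u v = i).card := by
  have h1 := card_master n (fun z => Flab n z = i ∧ (u, (0 : Fin 2)) ∈ z)
  have hpred : ∀ p : Fin n × Fin n,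
      (p.1 ≠ p.2 ∧ (Flab n s((p.1, 0), (p.2, 1)) = i ∧ (u, (0 : Fin 2)) ∈ s((p.1, 0), (p.2, 1))))
        ↔ (p.1 = u ∧ u ≠ p.2 ∧ g n u p.2 = i) := by
    intro p
    rw [Flab_mk, F2_eval, Sym2.mem_iff]
    constructor
    · rintro ⟨hne, hg, (hm | hm)⟩
      · have h0 := congrArg Prod.fst hm
        have h' : u = p.1 := h0
        subst h'
        exact ⟨rfl, hne, hg⟩
      · have h0 := congrArg Prod.snd hm
        have h' : (0 : Fin 2) = 1 := h0
        exact absurd h' (by decide)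
    · rintro ⟨rfl, hne, hg⟩
      exact ⟨hne, ⟨hg, Or.inl rfl⟩⟩
  have h2 : Nat.card {p : Fin n × Fin n // p.1 = u ∧ u ≠ p.2 ∧ g n u p.2 = i}
      = Nat.card {v : Fin n // u ≠ v ∧ g n u v = i} := by
    refine Nat.card_congr ⟨fun p => ⟨p.val.2, p.prop.2.1, p.prop.2.2⟩,
      fun v => ⟨(u, v.val), rfl, v.prop.1, v.prop.2⟩, fun p => ?_, fun v => rfl⟩
    exact Subtype.ext (Prod.ext p.prop.1.symm rfl)
  calc labDeg (crown n) (fcrown n) i (u, 0)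
      = Nat.card {p : Fin n × Fin n // p.1 ≠ p.2 ∧
          (Flab n s((p.1, 0), (p.2, 1)) = i ∧ (u, (0 : Fin 2)) ∈ s((p.1, 0), (p.2, 1)))} := h1
    _ = Nat.card {p : Fin n × Fin n // p.1 = u ∧ u ≠ p.2 ∧ g n u p.2 = i} :=
        Nat.card_congr (Equiv.subtypeEquivRight hpred)
    _ = Nat.card {v : Fin n // u ≠ v ∧ g n u v = i} := h2
    _ = (univ.filter fun v : Fin n => u ≠ v ∧ g n u v = i).card := by
        rw [Nat.card_eq_fintype_card, Fintype.card_subtype]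

lemma labDeg_col (n : ℕ) (v : Fin n) (i : ZMod 2) :
    labDeg (crown n) (fcrown n) i (v, 1)
      = (univ.filter fun u : Fin n => u ≠ v ∧ g n u v = i).card := by
  have h1 := card_master n (fun z => Flab n z = i ∧ (v, (1 : Fin 2)) ∈ z)
  have hpred : ∀ p : Fin n × Fin n,
      (p.1 ≠ p.2 ∧ (Flab n s((p.1, 0), (p.2, 1)) = i ∧ (v, (1 : Fin 2)) ∈ s((p.1, 0), (p.2, 1))))
        ↔ (p.2 = v ∧ p.1 ≠ v ∧ g n p.1 v = i) := by
    intro p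
    rw [Flab_mk, F2_eval, Sym2.mem_iff]
    constructor
    · rintro ⟨hne, hg, (hm | hm)⟩
      · have h0 := congrArg Prod.snd hm
        have h' : (1 : Fin 2) = 0 := h0
        exact absurd h' (by decide)
      · have h0 := congrArg Prod.fst hm
        have h' : v = p.2 := h0
        subst h'
        exact ⟨rfl, hne, hg⟩
    · rintro ⟨rfl, hne, hg⟩
      exact ⟨hne, ⟨hg, Or.inr rfl⟩⟩
  have h2 : Nat.card {p : Fin n × Fin n // p.2 = v ∧ p.1 ≠ v ∧ g n p.1 v = i}
      = Nat.card {u : Fin n // u ≠ v ∧ g n u v = i} := by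
    refine Nat.card_congr ⟨fun p => ⟨p.val.1, p.prop.2.1, p.prop.2.2⟩,
      fun u => ⟨(u.val, v), rfl, u.prop.1, u.prop.2⟩, fun p => ?_, fun u => rfl⟩
    exact Subtype.ext (Prod.ext rfl p.prop.1.symm)
  calc labDeg (crown n) (fcrown n) i (v, 1)
      = Nat.card {p : Fin n × Fin n // p.1 ≠ p.2 ∧
          (Flab n s((p.1, 0), (p.2, 1)) = i ∧ (v, (1 : Fin 2)) ∈ s((p.1, 0), (p.2, 1)))} := h1
    _ = Nat.card {p : Fin n × Fin n // p.2 = v ∧ p.1 ≠ v ∧ g n p.1 v = i} :=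
        Nat.card_congr (Equiv.subtypeEquivRight hpred)
    _ = Nat.card {u : Fin n // u ≠ v ∧ g n u v = i} := h2
    _ = (univ.filter fun u : Fin n => u ≠ v ∧ g n u v = i).card := by
        rw [Nat.card_eq_fintype_card, Fintype.card_subtype]

lemma edgeCount_eq (n : ℕ) (i : ZMod 2) :
    edgeCount (crown n) (fcrown n) i
      = ∑ u : Fin n, (univ.filter fun v : Fin n => u ≠ v ∧ g n u v = i).card := by
  have h1 := card_master n (fun z => Flab n z = i)
  have hpred : ∀ p : Fin n × Fin n,
      (p.1 ≠ p.2 ∧ Flab n s((p.1, 0), (p.2, 1)) = i) ↔ (p.1 ≠ p.2 ∧ g n p.1 p.2 = i) := by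
    intro p; rw [Flab_mk, F2_eval]
  calc edgeCount (crown n) (fcrown n) i
      = Nat.card {p : Fin n × Fin n // p.1 ≠ p.2 ∧ Flab n s((p.1, 0), (p.2, 1)) = i} := h1
    _ = Nat.card {p : Fin n × Fin n // p.1 ≠ p.2 ∧ g n p.1 p.2 = i} :=
        Nat.card_congr (Equiv.subtypeEquivRight hpred)
    _ = (univ.filter fun p : Fin n × Fin n => p.1 ≠ p.2 ∧ g n p.1 p.2 = i).card := by
        rw [Nat.card_eq_fintype_card, Fintype.card_subtype]
    _ = ∑ u : Fin n, ((univ.filter fun p : Fin n × Fin n => p.1 ≠ p.2 ∧ g n p.1 p.2 = i).filter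
          fun p => p.1 = u).card :=
        Finset.card_eq_sum_card_fiberwise (fun p _ => mem_univ p.1)
    _ = ∑ u : Fin n, (univ.filter fun v : Fin n => u ≠ v ∧ g n u v = i).card := by
        refine Finset.sum_congr rfl fun u _ => ?_
        refine Finset.card_nbij' (i := Prod.snd) (j := fun v => (u, v)) ?_ ?_ ?_ ?_
        · rintro p hp
          simp only [mem_coe, mem_filter, mem_univ, true_and] at hp ⊢
          obtain ⟨⟨hne, hg⟩, hfst⟩ := hp
          subst hfst
          exact ⟨hne, hg⟩
        · rintro v hv
          simp only [mem_coe, mem_filter, mem_univ, true_and] at hv ⊢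
          exact ⟨⟨hv.1, hv.2⟩, by simp⟩
        · rintro p hp
          simp only [mem_coe, mem_filter, mem_univ, true_and] at hp
          obtain ⟨-, hfst⟩ := hp
          rw [← hfst]
        · rintro v -; rfl

end CR

end CRaux

theorem crown_even_max_attained (n : ℕ) (heven : Even n) (hn : 4 ≤ n) :
    2 * n - 4 ∈ EBI (crown n) := by
  classical
  obtain ⟨r, hr⟩ := heven
  have hk : n = 2 * CR.kk n + 4 := by unfold CR.kk; omega
  refine ⟨CR.fcrown n, ⟨?_, ?_⟩, ?_⟩
  · -- surjectivity
    intro i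
    have hi : i = 0 ∨ i = 1 := by revert i; decide
    have h01 : (⟨0, by omega⟩ : Fin n) ≠ ⟨1, by omega⟩ := by
      intro h; exact absurd (congrArg Fin.val h) (by simp)
    have h21 : (⟨2, by omega⟩ : Fin n) ≠ ⟨1, by omega⟩ := by
      intro h; exact absurd (congrArg Fin.val h) (by simp)
    rcases hi with rfl | rfl
    · refine ⟨⟨s(((⟨2, by omega⟩ : Fin n), (0 : Fin 2)), ((⟨1, by omega⟩ : Fin n), (1 : Fin 2))),
        (SimpleGraph.mem_edgeSet _).mpr ((CR.crown_adj _ _).mpr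
          ⟨h21, (by decide : ((0 : Fin 2) ≠ (1 : Fin 2)))⟩)⟩, ?_⟩
      show CR.Flab n _ = 0
      rw [CR.Flab_mk, CR.F2_eval, CR.g_main (by simp) (by simp) h21]
      have hdd : CR.dd n 2 1 = n - 2 := by
        unfold CR.dd
        rw [show 1 + (n - 1) - 2 = n - 2 by omega, Nat.mod_eq_of_lt (by omega)]
      rw [hdd, if_neg (by omega)]
    · refine ⟨⟨s(((⟨0, by omega⟩ : Fin n), (0 : Fin 2)), ((⟨1, by omega⟩ : Fin n), (1 : Fin 2))),
        (SimpleGraph.mem_edgeSet _).mpr ((CR.crown_adj _ _).mpr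
          ⟨h01, (by decide : ((0 : Fin 2) ≠ (1 : Fin 2)))⟩)⟩, ?_⟩
      show CR.Flab n _ = 1
      rw [CR.Flab_mk, CR.F2_eval]
      exact CR.g_zero_left rfl h01
  · -- friendliness
    have z0 : Fin n := ⟨0, by omega⟩
    have hmem : (⟨0, by omega⟩ : Fin n) ∈ Finset.univ := Finset.mem_univ _
    have he0 : edgeCount (crown n) (CR.fcrown n) 0 = (n - 1) * (CR.kk n + 2) := by
      rw [CR.edgeCount_eq, ← Finset.add_sum_erase Finset.univ _ hmem,
        CR.rowz0 (⟨0, by omega⟩ : Fin n) rfl]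
      rw [Finset.sum_congr rfl (fun u hu => CR.row0 hn hk u
        (fun h => (Finset.mem_erase.mp hu).1 (Fin.ext h)))]
      rw [Finset.sum_const, Finset.card_erase_of_mem hmem, Finset.card_univ, Fintype.card_fin]
      simp [Nat.smul_one_eq_cast]
    have he1 : edgeCount (crown n) (CR.fcrown n) 1 = (n - 1) + (n - 1) * (CR.kk n + 1) := by
      rw [CR.edgeCount_eq, ← Finset.add_sum_erase Finset.univ _ hmem,
        CR.rowz1 hn (⟨0, by omega⟩ : Fin n) rfl]
      rw [Finset.sum_congr rfl (fun u hu => CR.row1 hn hk u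
        (fun h => (Finset.mem_erase.mp hu).1 (Fin.ext h)))]
      rw [Finset.sum_const, Finset.card_erase_of_mem hmem, Finset.card_univ, Fintype.card_fin]
      simp [Nat.smul_one_eq_cast, mul_comm]
    have hee : edgeCount (crown n) (CR.fcrown n) 0 = edgeCount (crown n) (CR.fcrown n) 1 := by
      rw [he0, he1]; ring
    rw [hee, sub_self, abs_zero]
    exact zero_le_one
  · -- ebIndex
    have hv1 : vertexCount (crown n) (CR.fcrown n) 1 = 2 := by
      unfold vertexCount
      have hsub : (1 - 1 : ZMod 2) = 0 := by decide
      rw [hsub]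
      have hiff : ∀ w : Fin n × Fin 2,
          (labDeg (crown n) (CR.fcrown n) 0 w < labDeg (crown n) (CR.fcrown n) 1 w)
            ↔ w.1.val = 0 := by
        rintro ⟨uu, c⟩
        dsimp only
        have hc := c.isLt
        by_cases hc0 : c.val = 0
        · have : c = (0 : Fin 2) := Fin.ext hc0
          subst this
          rw [CR.labDeg_row, CR.labDeg_row]
          by_cases hu : uu.val = 0
          · rw [CR.rowz0 uu hu, CR.rowz1 hn uu hu]; omega
          · rw [CR.row0 hn hk uu hu, CR.row1 hn hk uu hu]; omega
        · have : c = (1 : Fin 2) := Fin.ext (by omega)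
          subst this
          rw [CR.labDeg_col, CR.labDeg_col]
          by_cases hu : uu.val = 0
          · rw [CR.colz0 uu hu, CR.colz1 hn uu hu]; omega
          · rw [CR.col0 hn hk uu hu, CR.col1 hn hk uu hu]; omega
      rw [Nat.card_congr (Equiv.subtypeEquivRight hiff), Nat.card_eq_fintype_card,
        Fintype.card_subtype]
      have : (Finset.univ.filter fun w : Fin n × Fin 2 => w.1.val = 0)
          = {(⟨0, by omega⟩ : Fin n)} ×ˢ (Finset.univ : Finset (Fin 2)) := by
        ext ⟨a, b⟩
        simp [Finset.mem_product, Fin.ext_iff, eq_comm]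
      rw [this, Finset.card_product, Finset.card_singleton, Finset.card_univ, Fintype.card_fin]
    have hv0 : vertexCount (crown n) (CR.fcrown n) 0 = 2 * n - 2 := by
      unfold vertexCount
      have hsub : (1 - 0 : ZMod 2) = 1 := by decide
      rw [hsub]
      have hiff : ∀ w : Fin n × Fin 2,
          (labDeg (crown n) (CR.fcrown n) 1 w < labDeg (crown n) (CR.fcrown n) 0 w)
            ↔ w.1.val ≠ 0 := by
        rintro ⟨uu, c⟩
        dsimp only
        have hc := c.isLt
        by_cases hc0 : c.val = 0
        · have : c = (0 : Fin 2) := Fin.ext hc0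
          subst this
          rw [CR.labDeg_row, CR.labDeg_row]
          by_cases hu : uu.val = 0
          · rw [CR.rowz0 uu hu, CR.rowz1 hn uu hu]; omega
          · rw [CR.row0 hn hk uu hu, CR.row1 hn hk uu hu]; omega
        · have : c = (1 : Fin 2) := Fin.ext (by omega)
          subst this
          rw [CR.labDeg_col, CR.labDeg_col]
          by_cases hu : uu.val = 0
          · rw [CR.colz0 uu hu, CR.colz1 hn uu hu]; omega
          · rw [CR.col0 hn hk uu hu, CR.col1 hn hk uu hu]; omega
      rw [Nat.card_congr (Equiv.subtypeEquivRight hiff), Nat.card_eq_fintype_card,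
        Fintype.card_subtype]
      have : (Finset.univ.filter fun w : Fin n × Fin 2 => w.1.val ≠ 0)
          = ((Finset.univ : Finset (Fin n)).erase ⟨0, by omega⟩) ×ˢ (Finset.univ : Finset (Fin 2)) := by
        ext ⟨a, b⟩
        simp [Finset.mem_product, Fin.ext_iff, eq_comm]
      rw [this, Finset.card_product, Finset.card_erase_of_mem (Finset.mem_univ _),
        Finset.card_univ, Finset.card_univ, Fintype.card_fin, Fintype.card_fin]
      omega
    unfold ebIndex
    rw [hv0, hv1]
    omega
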